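/- arXiv:2504.16403 — 2 statements merged into one kernel-verified Lean document; each statement's English description precedes it below -/
import Mathlib

section
/- Let r₁, r₂, r₃, r₄ be a solution of the four-body system in the center-of-mass frame whose initial data satisfy mω r₂₄(0) = p₁₃(0) and p₂₄(0) = −mω r₁₃(0). Then the motion is a four-body choreography: with τ = π/(2ω), r₂(t) = r₁(t + τ), r₃(t) = r₁(t + 2τ), and r₄(t) = r₁(t + 3τ) for all t ∈ ℝ, so all four bodies traverse the same closed curve with successive time delays τ. -/
noncomputable section

/-- The Euclidean plane. -/
abbrev Plane : Type := EuclideanSpace ℝ (Fin 2)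

/-- A solution of the planar four-body system with pairwise quadratic potential
`V = (mω²/4)(2‖r₁−r₂‖² + 2‖r₂−r₃‖² + 2‖r₃−r₄‖² + 2‖r₁−r₄‖² − ‖r₁−r₃‖² − ‖r₂−r₄‖²)`:
four twice differentiable curves satisfying Newton's equations
`rᵢ'' = −ω²((rᵢ − r_{i+1}) + (rᵢ − r_{i−1}) − ½(rᵢ − r_{i+2}))` (indices mod 4). -/
def IsFourBodySolution (ω : ℝ) (r₁ r₂ r₃ r₄ : ℝ → Plane) : Prop :=
  (Differentiable ℝ r₁ ∧ Differentiable ℝ (deriv r₁)) ∧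
  (Differentiable ℝ r₂ ∧ Differentiable ℝ (deriv r₂)) ∧
  (Differentiable ℝ r₃ ∧ Differentiable ℝ (deriv r₃)) ∧
  (Differentiable ℝ r₄ ∧ Differentiable ℝ (deriv r₄)) ∧
  (∀ t : ℝ, deriv (deriv r₁) t =
    (-(ω ^ 2)) • ((r₁ t - r₂ t) + (r₁ t - r₄ t) - (1 / 2 : ℝ) • (r₁ t - r₃ t))) ∧
  (∀ t : ℝ, deriv (deriv r₂) t =
    (-(ω ^ 2)) • ((r₂ t - r₃ t) + (r₂ t - r₁ t) - (1 / 2 : ℝ) • (r₂ t - r₄ t))) ∧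
  (∀ t : ℝ, deriv (deriv r₃) t =
    (-(ω ^ 2)) • ((r₃ t - r₄ t) + (r₃ t - r₂ t) - (1 / 2 : ℝ) • (r₃ t - r₁ t))) ∧
  (∀ t : ℝ, deriv (deriv r₄) t =
    (-(ω ^ 2)) • ((r₄ t - r₁ t) + (r₄ t - r₃ t) - (1 / 2 : ℝ) • (r₄ t - r₂ t)))

open Real

local notation "⟪" x ", " y "⟫" => @inner ℝ _ _ x y

lemma osc_zero (c : ℝ) (hc : c ≠ 0) (f : ℝ → Plane)
    (hf : Differentiable ℝ f) (hf' : Differentiable ℝ (deriv f))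
    (hode : ∀ t, deriv (deriv f) t = (-(c ^ 2)) • f t)
    (h0 : f 0 = 0) (h0' : deriv f 0 = 0) : ∀ t, f t = 0 := by
  set E : ℝ → ℝ := fun t => ⟪deriv f t, deriv f t⟫ + c ^ 2 * ⟪f t, f t⟫ with hE
  have hDf : ∀ t, HasDerivAt f (deriv f t) t := fun t => (hf t).hasDerivAt
  have hDf' : ∀ t, HasDerivAt (deriv f) ((-(c ^ 2)) • f t) t := fun t => by
    have := (hf' t).hasDerivAt
    rwa [hode t] at this
  have hE' : ∀ t, HasDerivAt E 0 t := by
    intro t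
    have h1 := (hDf' t).inner ℝ (hDf' t)
    have h2 := ((hDf t).inner ℝ (hDf t)).const_mul (c ^ 2)
    have h3 : HasDerivAt E _ t := h1.fun_add h2
    convert h3 using 1
    simp [real_inner_smul_left, real_inner_smul_right, real_inner_comm (f t) (deriv f t)]
    ring
  have hEc : ∀ t, E t = E 0 := fun t =>
    is_const_of_deriv_eq_zero (fun x => (hE' x).differentiableAt)
      (fun x => (hE' x).deriv) t 0
  have hE0 : E 0 = 0 := by simp [hE, h0, h0']
  intro t
  have ht : E t = 0 := (hEc t).trans hE0
  have h1 : (0:ℝ) ≤ ⟪deriv f t, deriv f t⟫ := real_inner_self_nonneg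
  have h2 : (0:ℝ) ≤ ⟪f t, f t⟫ := real_inner_self_nonneg
  have hc2 : (0:ℝ) < c ^ 2 := by positivity
  have ht' : ⟪deriv f t, deriv f t⟫ + c ^ 2 * ⟪f t, f t⟫ = 0 := ht
  have : ⟪f t, f t⟫ = (0:ℝ) := by nlinarith
  exact inner_self_eq_zero.mp this

lemma lin_zero (f : ℝ → Plane) (hf : Differentiable ℝ f) (hf' : Differentiable ℝ (deriv f))
    (hode : ∀ t, deriv (deriv f) t = 0) (h0 : f 0 = 0) (h0' : deriv f 0 = 0) :
    ∀ t, f t = 0 := by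
  have h1 : ∀ t, deriv f t = 0 := fun t => (is_const_of_deriv_eq_zero hf' hode t 0).trans h0'
  exact fun t => (is_const_of_deriv_eq_zero hf h1 t 0).trans h0

lemma osc_formula (c : ℝ) (hc : c ≠ 0) (f : ℝ → Plane)
    (hf : Differentiable ℝ f) (hf' : Differentiable ℝ (deriv f))
    (hode : ∀ t, deriv (deriv f) t = (-(c ^ 2)) • f t) :
    ∀ t, f t = Real.cos (c * t) • f 0 + (Real.sin (c * t) / c) • deriv f 0 := by
  set a := f 0 with ha
  set b := deriv f 0 with hb
  set e : ℝ → Plane := fun t => Real.cos (c * t) • a + (Real.sin (c * t) / c) • b with he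
  set e1 : ℝ → Plane := fun t => (-(Real.sin (c * t)) * c) • a + (Real.cos (c * t) * c / c) • b
    with he1
  set e2 : ℝ → Plane := fun t => (-(Real.cos (c * t) * c) * c) • a +
    ((-(Real.sin (c * t)) * c) * c / c) • b with he2
  have hct : ∀ t : ℝ, HasDerivAt (fun t : ℝ => c * t) c t := fun t => by
    simpa using (hasDerivAt_id t).const_mul c
  have hD1 : ∀ t, HasDerivAt e (e1 t) t := by
    intro t
    exact ((((Real.hasDerivAt_cos (c*t)).comp t (hct t)).smul_const a).add
      ((((Real.hasDerivAt_sin (c*t)).comp t (hct t)).div_const c).smul_const b))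
  have hD2 : ∀ t, HasDerivAt e1 (e2 t) t := by
    intro t
    exact (((((Real.hasDerivAt_sin (c*t)).comp t (hct t)).neg).mul_const c).smul_const a).add
      (((((Real.hasDerivAt_cos (c*t)).comp t (hct t)).mul_const c).div_const c).smul_const b)
  set g : ℝ → Plane := fun t => f t - e t with hg
  have hgdiff : Differentiable ℝ g := hf.sub (fun t => (hD1 t).differentiableAt)
  have hgd : deriv g = fun t => deriv f t - e1 t :=
    funext fun t => ((hf t).hasDerivAt.sub (hD1 t)).deriv
  have hgd' : Differentiable ℝ (deriv g) := by
    rw [hgd]; exact hf'.sub (fun t => (hD2 t).differentiableAt)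
  have hgode : ∀ t, deriv (deriv g) t = (-(c ^ 2)) • g t := by
    intro t
    rw [hgd]
    have hfd2 : HasDerivAt (deriv f) ((-(c ^ 2)) • f t) t := by
      have := (hf' t).hasDerivAt; rwa [hode t] at this
    rw [(hfd2.fun_sub (hD2 t)).deriv, hg, he2]
    simp only [smul_sub]
    congr 1
    rw [he]
    match_scalars
    all_goals field_simp
    all_goals try ring
    all_goals simp
  have hg0 : g 0 = 0 := by simp [hg, he, ha]
  have hg0' : deriv g 0 = 0 := by
    rw [hgd]
    simp [he1, ← hb, mul_div_assoc, div_self hc]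
  intro t
  have := osc_zero c hc g hgdiff hgd' hgode hg0 hg0' t
  have h2 : f t = e t := by
    have := sub_eq_zero.mp this
    simpa [hg] using this
  simpa [he] using h2

/-- Under the choreography conditions on the initial data, the motion is
a four-body choreography: all four bodies traverse the same curve with successive time
delays `τ = π/(2ω)`. -/
theorem four_body_choreography (m ω : ℝ) (hm : 0 < m) (hω : 0 < ω)
    (r₁ r₂ r₃ r₄ : ℝ → Plane)
    (hsol : IsFourBodySolution ω r₁ r₂ r₃ r₄)
    (hcomr : r₁ 0 + r₂ 0 + r₃ 0 + r₄ 0 = 0)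
    (hcomp : m • deriv r₁ 0 + m • deriv r₂ 0 + m • deriv r₃ 0 + m • deriv r₄ 0 = 0)
    (hcos : (m * ω) • (r₂ 0 - r₄ 0) = m • deriv r₁ 0 - m • deriv r₃ 0)
    (hsin : m • deriv r₂ 0 - m • deriv r₄ 0 = (-(m * ω)) • (r₁ 0 - r₃ 0)) :
    ∀ t : ℝ,
      r₂ t = r₁ (t + Real.pi / (2 * ω))
      ∧ r₃ t = r₁ (t + 2 * (Real.pi / (2 * ω)))
      ∧ r₄ t = r₁ (t + 3 * (Real.pi / (2 * ω))) := by
  obtain ⟨⟨h1d, h1d'⟩, ⟨h2d, h2d'⟩, ⟨h3d, h3d'⟩, ⟨h4d, h4d'⟩, ode1, ode2, ode3, ode4⟩ := hsol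
  have hωne : ω ≠ 0 := ne_of_gt hω
  have hmne : m ≠ 0 := ne_of_gt hm
  -- the normal-mode combinations
  set u : ℝ → Plane := fun t => r₁ t - r₃ t with hu_def
  set v : ℝ → Plane := fun t => r₂ t - r₄ t with hv_def
  set A : ℝ → Plane := fun t => r₁ t + r₃ t with hA_def
  set B : ℝ → Plane := fun t => r₂ t + r₄ t with hB_def
  set S : ℝ → Plane := fun t => A t + B t with hS_def
  -- differentiability and first derivatives
  have hud : Differentiable ℝ u := h1d.sub h3d
  have hud1 : deriv u = fun t => deriv r₁ t - deriv r₃ t :=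
    funext fun t => deriv_sub (h1d t) (h3d t)
  have hud' : Differentiable ℝ (deriv u) := by rw [hud1]; exact h1d'.sub h3d'
  have hvd : Differentiable ℝ v := h2d.sub h4d
  have hvd1 : deriv v = fun t => deriv r₂ t - deriv r₄ t :=
    funext fun t => deriv_sub (h2d t) (h4d t)
  have hvd' : Differentiable ℝ (deriv v) := by rw [hvd1]; exact h2d'.sub h4d'
  have hAd : Differentiable ℝ A := h1d.add h3d
  have hAd1 : deriv A = fun t => deriv r₁ t + deriv r₃ t :=
    funext fun t => deriv_add (h1d t) (h3d t)
  have hAd' : Differentiable ℝ (deriv A) := by rw [hAd1]; exact h1d'.add h3d'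
  have hBd : Differentiable ℝ B := h2d.add h4d
  have hBd1 : deriv B = fun t => deriv r₂ t + deriv r₄ t :=
    funext fun t => deriv_add (h2d t) (h4d t)
  have hBd' : Differentiable ℝ (deriv B) := by rw [hBd1]; exact h2d'.add h4d'
  have hSd : Differentiable ℝ S := hAd.add hBd
  have hSd1 : deriv S = fun t => deriv A t + deriv B t :=
    funext fun t => deriv_add (hAd t) (hBd t)
  have hSd' : Differentiable ℝ (deriv S) := by rw [hSd1]; exact hAd'.add hBd'
  -- second derivatives / mode equations
  have hude : ∀ t, deriv (deriv u) t = (-(ω ^ 2)) • u t := by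
    intro t
    rw [hud1, deriv_fun_sub (h1d' t) (h3d' t), ode1 t, ode3 t]
    simp only [hu_def]
    module
  have hvde : ∀ t, deriv (deriv v) t = (-(ω ^ 2)) • v t := by
    intro t
    rw [hvd1, deriv_fun_sub (h2d' t) (h4d' t), ode2 t, ode4 t]
    simp only [hv_def]
    module
  have hAde : ∀ t, deriv (deriv A) t = (-(ω ^ 2)) • ((2:ℝ) • A t - (2:ℝ) • B t) := by
    intro t
    rw [hAd1, deriv_fun_add (h1d' t) (h3d' t), ode1 t, ode3 t]
    simp only [hA_def, hB_def]
    module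
  have hBde : ∀ t, deriv (deriv B) t = (-(ω ^ 2)) • ((2:ℝ) • B t - (2:ℝ) • A t) := by
    intro t
    rw [hBd1, deriv_fun_add (h2d' t) (h4d' t), ode2 t, ode4 t]
    simp only [hA_def, hB_def]
    module
  have hSde : ∀ t, deriv (deriv S) t = 0 := by
    intro t
    rw [hSd1, deriv_fun_add (hAd' t) (hBd' t), hAde t, hBde t]
    module
  -- the center of mass vanishes identically
  have hS0 : S 0 = 0 := by
    simp only [hS_def, hA_def, hB_def]
    linear_combination (norm := module) hcomr
  have hsum : deriv r₁ 0 + deriv r₂ 0 + deriv r₃ 0 + deriv r₄ 0 = 0 := by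
    have key : m • (deriv r₁ 0 + deriv r₂ 0 + deriv r₃ 0 + deriv r₄ 0) = 0 := by
      linear_combination (norm := module) hcomp
    rcases smul_eq_zero.mp key with h' | h'
    · exact absurd h' hmne
    · exact h'
  have hS0' : deriv S 0 = 0 := by
    simp only [hSd1, hAd1, hBd1]
    linear_combination (norm := module) hsum
  have hSz : ∀ t, S t = 0 := lin_zero S hSd hSd' hSde hS0 hS0'
  have hBA : ∀ t, B t = -A t := by
    intro t
    have := hSz t
    simp only [hS_def] at this
    linear_combination (norm := module) this
  -- A satisfies the 2ω oscillator equation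
  have hAde2 : ∀ t, deriv (deriv A) t = (-((2 * ω) ^ 2)) • A t := by
    intro t
    rw [hAde t, hBA t]
    module
  -- explicit solutions
  have hufor := osc_formula ω hωne u hud hud' hude
  have hvfor := osc_formula ω hωne v hvd hvd' hvde
  have hAfor := osc_formula (2 * ω) (by positivity) A hAd hAd' hAde2
  -- initial-condition relations
  have hv0eq : v 0 = ω⁻¹ • deriv u 0 := by
    have key : m • (ω • v 0 - deriv u 0) = 0 := by
      simp only [hv_def, hud1]
      linear_combination (norm := module) hcos
    rcases smul_eq_zero.mp key with h' | h'
    · exact absurd h' hmne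
    · have h2 : ω • v 0 = deriv u 0 := sub_eq_zero.mp h'
      rw [← h2, smul_smul, inv_mul_cancel₀ hωne, one_smul]
  have hdv0eq : deriv v 0 = (-ω) • u 0 := by
    have key : m • (deriv v 0 - (-ω) • u 0) = 0 := by
      rw [hvd1]
      simp only [hv_def, hu_def]
      linear_combination (norm := module) hsin
    rcases smul_eq_zero.mp key with h' | h'
    · exact absurd h' hmne
    · exact sub_eq_zero.mp h'
  -- shift identities
  have hAτ : ∀ s : ℝ, A (s + Real.pi / (2 * ω)) = -A s := by
    intro s
    rw [hAfor (s + Real.pi / (2 * ω)), hAfor s,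
      show 2 * ω * (s + Real.pi / (2 * ω)) = 2 * ω * s + Real.pi by field_simp,
      Real.cos_add_pi, Real.sin_add_pi]
    module
  have hA2τ : ∀ s : ℝ, A (s + 2 * (Real.pi / (2 * ω))) = A s := by
    intro s
    rw [hAfor (s + 2 * (Real.pi / (2 * ω))), hAfor s,
      show 2 * ω * (s + 2 * (Real.pi / (2 * ω))) = 2 * ω * s + 2 * Real.pi by field_simp,
      Real.cos_add_two_pi, Real.sin_add_two_pi]
  have huτ : ∀ s : ℝ, u (s + Real.pi / (2 * ω)) = v s := by
    intro s
    rw [hufor (s + Real.pi / (2 * ω)), hvfor s,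
      show ω * (s + Real.pi / (2 * ω)) = ω * s + Real.pi / 2 by field_simp,
      Real.cos_add_pi_div_two, Real.sin_add_pi_div_two, hv0eq, hdv0eq]
    match_scalars
    all_goals field_simp
  have hu2τ : ∀ s : ℝ, u (s + 2 * (Real.pi / (2 * ω))) = -u s := by
    intro s
    rw [hufor (s + 2 * (Real.pi / (2 * ω))), hufor s,
      show ω * (s + 2 * (Real.pi / (2 * ω))) = ω * s + Real.pi by field_simp,
      Real.cos_add_pi, Real.sin_add_pi]
    module
  have hv2τ : ∀ s : ℝ, v (s + 2 * (Real.pi / (2 * ω))) = -v s := by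
    intro s
    rw [hvfor (s + 2 * (Real.pi / (2 * ω))), hvfor s,
      show ω * (s + 2 * (Real.pi / (2 * ω))) = ω * s + Real.pi by field_simp,
      Real.cos_add_pi, Real.sin_add_pi]
    module
  -- recover the bodies from the modes
  have er1 : ∀ s, r₁ s = (1 / 2 : ℝ) • (A s + u s) := by
    intro s; simp only [hA_def, hu_def]; module
  have er2 : ∀ s, r₂ s = (1 / 2 : ℝ) • (B s + v s) := by
    intro s; simp only [hB_def, hv_def]; module
  have er3 : ∀ s, r₃ s = (1 / 2 : ℝ) • (A s - u s) := by
    intro s; simp only [hA_def, hu_def]; module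
  have er4 : ∀ s, r₄ s = (1 / 2 : ℝ) • (B s - v s) := by
    intro s; simp only [hB_def, hv_def]; module
  intro t
  refine ⟨?_, ?_, ?_⟩
  · rw [er2 t, er1 (t + Real.pi / (2 * ω)), hAτ t, huτ t, hBA t]
  · rw [er3 t, er1 (t + 2 * (Real.pi / (2 * ω))), hA2τ t, hu2τ t]
    module
  · rw [er4 t, er1 (t + 3 * (Real.pi / (2 * ω))),
      show t + 3 * (Real.pi / (2 * ω)) = t + 2 * (Real.pi / (2 * ω)) + Real.pi / (2 * ω) by ring,
      hAτ (t + 2 * (Real.pi / (2 * ω))), huτ (t + 2 * (Real.pi / (2 * ω))),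
      hA2τ t, hv2τ t, hBA t]
    module
end
end

section
/- (Particular integrals.) Along the trisectrix limaçon solution, the scalar products r₁₃(t) · r₂₄(t) and p₁₃(t) · p₂₄(t) are each identically zero for all t ∈ ℝ; in particular, each of these two quantities is separately conserved along this trajectory. -/
noncomputable section

/-- The trisectrix limaçon curve
`r(t) = (½(cos ωt + cos 2ωt), ½(sin ωt + sin 2ωt))`. -/
def limax (ω : ℝ) : ℝ → Plane := fun t =>
  (WithLp.equiv 2 (Fin 2 → ℝ)).symm
    ![(Real.cos (ω * t) + Real.cos (2 * ω * t)) / 2,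
      (Real.sin (ω * t) + Real.sin (2 * ω * t)) / 2]

lemma hasDerivAt_cos_lin (a b t : ℝ) :
    HasDerivAt (fun s => Real.cos (a * (s + b))) (-(a * Real.sin (a * (t + b)))) t := by
  have h : HasDerivAt (fun s => a * (s + b)) a t := by
    simpa using ((hasDerivAt_id t).add_const b).const_mul a
  simpa [mul_comm] using h.cos

lemma hasDerivAt_sin_lin (a b t : ℝ) :
    HasDerivAt (fun s => Real.sin (a * (s + b))) (a * Real.cos (a * (t + b))) t := by
  have h : HasDerivAt (fun s => a * (s + b)) a t := by
    simpa using ((hasDerivAt_id t).add_const b).const_mul a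
  simpa [mul_comm] using h.sin

lemma deriv_limax_shift (ω c t : ℝ) :
    deriv (fun s => limax ω (s + c)) t =
      (WithLp.equiv 2 (Fin 2 → ℝ)).symm
        ![(-(ω * Real.sin (ω * (t + c))) + -(2 * ω * Real.sin (2 * ω * (t + c)))) / 2,
          (ω * Real.cos (ω * (t + c)) + 2 * ω * Real.cos (2 * ω * (t + c))) / 2] := by
  have hf : HasDerivAt (fun s => (![(Real.cos (ω * (s + c)) + Real.cos (2 * ω * (s + c))) / 2,
      (Real.sin (ω * (s + c)) + Real.sin (2 * ω * (s + c))) / 2] : Fin 2 → ℝ))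
      (![(-(ω * Real.sin (ω * (t + c))) + -(2 * ω * Real.sin (2 * ω * (t + c)))) / 2,
          (ω * Real.cos (ω * (t + c)) + 2 * ω * Real.cos (2 * ω * (t + c))) / 2]) t := by
    rw [hasDerivAt_pi]
    intro i
    fin_cases i
    · simpa using ((hasDerivAt_cos_lin ω c t).add (hasDerivAt_cos_lin (2*ω) c t)).div_const 2
    · simpa using ((hasDerivAt_sin_lin ω c t).add (hasDerivAt_sin_lin (2*ω) c t)).div_const 2
  exact HasDerivAt.deriv
    ((EuclideanSpace.equiv (Fin 2) ℝ).symm.toContinuousLinearMap.hasFDerivAt.comp_hasDerivAt t hf :)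

/-- **particular integrals.** Along the trisectrix limaçon solution
`rₖ(t) = r(t + (k−1)τ)`, `τ = π/(2ω)`, the scalar products `r₁₃ · r₂₄` and `p₁₃ · p₂₄`
are each identically zero (hence each is separately conserved along this trajectory). -/
theorem particular_integrals_limax (m ω : ℝ) (hm : 0 < m) (hω : 0 < ω) :
    ∀ t : ℝ,
      (inner ℝ (limax ω t - limax ω (t + 2 * (Real.pi / (2 * ω))))
        (limax ω (t + Real.pi / (2 * ω)) - limax ω (t + 3 * (Real.pi / (2 * ω)))) : ℝ) = 0
      ∧
      (inner ℝ
        (m • deriv (fun s => limax ω s) t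
          - m • deriv (fun s => limax ω (s + 2 * (Real.pi / (2 * ω)))) t)
        (m • deriv (fun s => limax ω (s + Real.pi / (2 * ω))) t
          - m • deriv (fun s => limax ω (s + 3 * (Real.pi / (2 * ω)))) t) : ℝ) = 0 := by
  intro t
  have hω' : ω ≠ 0 := ne_of_gt hω
  have h0 : (fun s => limax ω s) = fun s => limax ω (s + 0) := by simp
  have h1 : ω * (t + 2 * (Real.pi / (2 * ω))) = ω * t + Real.pi := by field_simp
  have h2 : 2 * ω * (t + 2 * (Real.pi / (2 * ω))) = 2 * (ω * t) + 2 * Real.pi := by field_simp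
  have h3 : ω * (t + Real.pi / (2 * ω)) = ω * t + Real.pi / 2 := by field_simp
  have h4 : 2 * ω * (t + Real.pi / (2 * ω)) = 2 * (ω * t) + Real.pi := by field_simp
  have h5 : ω * (t + 3 * (Real.pi / (2 * ω))) = ω * t + (Real.pi + Real.pi / 2) := by field_simp; ring
  have h6 : 2 * ω * (t + 3 * (Real.pi / (2 * ω))) = 2 * (ω * t) + (2 * Real.pi + Real.pi) := by field_simp; ring
  constructor
  · simp only [limax, PiLp.inner_apply, RCLike.inner_apply, starRingEnd_apply, star_trivial,
      Fin.sum_univ_two, PiLp.sub_apply, WithLp.equiv_symm_apply, PiLp.toLp_apply,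
      Matrix.cons_val_zero, Matrix.cons_val_one, Matrix.head_cons,
      h1, h2, h3, h4, h5, h6, Real.cos_add, Real.sin_add, Real.cos_pi, Real.sin_pi,
      Real.cos_two_pi, Real.sin_two_pi, Real.cos_pi_div_two, Real.sin_pi_div_two]
    ring
  · rw [h0, deriv_limax_shift, deriv_limax_shift, deriv_limax_shift, deriv_limax_shift]
    simp only [PiLp.inner_apply, RCLike.inner_apply, starRingEnd_apply, star_trivial,
      Fin.sum_univ_two, PiLp.sub_apply, PiLp.smul_apply, WithLp.equiv_symm_apply, PiLp.toLp_apply,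
      Matrix.cons_val_zero, Matrix.cons_val_one, Matrix.head_cons, smul_eq_mul, add_zero,
      h1, h2, h3, h4, h5, h6, Real.cos_add, Real.sin_add, Real.cos_pi, Real.sin_pi,
      Real.cos_two_pi, Real.sin_two_pi, Real.cos_pi_div_two, Real.sin_pi_div_two]
    ring
end
end
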